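/- Let n ≥ 1, a ∈ ℝ, and let f_1,…,f_n be (n-1)-times continuously differentiable real functions on a neighborhood of a. Then, as (x_1,…,x_n) tends to (a,…,a) through n-tuples with pairwise distinct entries, the ratio det( f_j(x_i) )_{i,j=1}^n / ∏_{1≤i<j≤n} (x_j - x_i) converges to det( f_j^{(i-1)}(a) )_{i,j=1}^n / ∏_{k=1}^{n-1} k!. -/

import Mathlib

open Set Filter Topology Polynomial Finset

open Polynomial in
theorem contDiff_polyeval (N : WithTop ℕ∞) (p : ℝ[X]) : ContDiff ℝ N fun x : ℝ => p.eval x := by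
  induction p using Polynomial.induction_on' with
  | add p q hp hq => simpa using hp.add hq
  | monomial n a => simpa [Polynomial.eval_monomial] using (contDiff_const (c := a)).mul (contDiff_id.pow n)

theorem iterated_rolle : ∀ (k : ℕ) (g : ℝ → ℝ) (U : Set ℝ), IsOpen U → ContDiffOn ℝ k g U →
    ∀ y : Fin (k + 1) → ℝ, StrictMono y → Set.Icc (y 0) (y (Fin.last k)) ⊆ U →
    (∀ j, g (y j) = 0) →
    ∃ ξ ∈ Set.Icc (y 0) (y (Fin.last k)), iteratedDeriv k g ξ = 0 := by
  intro k
  induction k with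
  | zero =>
    intro g U _ _ y _ _ hz
    exact ⟨y 0, ⟨le_refl _, le_refl _⟩, by simpa using hz 0⟩
  | succ k IH =>
    intro g U hU hg y hy hIcc hz
    -- Rolle on each consecutive pair
    have hIccU : ∀ j : Fin (k + 1),
        Set.Icc (y j.castSucc) (y j.succ) ⊆ Set.Icc (y 0) (y (Fin.last (k + 1))) := by
      intro j
      apply Set.Icc_subset_Icc (hy.monotone (Fin.zero_le _)) (hy.monotone (Fin.le_last _))
    have key : ∀ j : Fin (k + 1), ∃ c ∈ Set.Ioo (y j.castSucc) (y j.succ), deriv g c = 0 := by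
      intro j
      have hlt : y j.castSucc < y j.succ := hy Fin.castSucc_lt_succ
      have hcont : ContinuousOn g (Set.Icc (y j.castSucc) (y j.succ)) :=
        hg.continuousOn.mono ((hIccU j).trans hIcc)
      have heq : g (y j.castSucc) = g (y j.succ) := by rw [hz, hz]
      have hdiff : ∀ x ∈ Set.Ioo (y j.castSucc) (y j.succ), DifferentiableAt ℝ g x := by
        intro x hx
        have hxU : x ∈ U := hIcc (hIccU j (Set.mem_Icc_of_Ioo hx))
        exact (hg.contDiffAt (hU.mem_nhds hxU)).differentiableAt (by simp)
      exact exists_deriv_eq_zero hlt hcont heq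
    choose c hc hc0 using key
    have hcmono : StrictMono c := by
      intro j1 j2 hj
      have h1 : c j1 < y j1.succ := (hc j1).2
      have h2 : y j2.castSucc < c j2 := (hc j2).1
      have h3 : y j1.succ ≤ y j2.castSucc := by
        apply hy.monotone
        rw [Fin.le_def, Fin.val_succ, Fin.coe_castSucc]
        exact hj
      linarith
    have hcIcc : Set.Icc (c 0) (c (Fin.last k)) ⊆ Set.Icc (y 0) (y (Fin.last (k + 1))) := by
      apply Set.Icc_subset_Icc
      · exact le_of_lt (lt_of_le_of_lt (hy.monotone (Fin.zero_le _)) (hc 0).1)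
      · calc c (Fin.last k) ≤ y (Fin.last k).succ := le_of_lt (hc _).2
          _ ≤ y (Fin.last (k + 1)) := hy.monotone (Fin.le_last _)
    have hg' : ContDiffOn ℝ k (deriv g) U :=
      hg.deriv_of_isOpen hU (by exact_mod_cast le_refl _)
    obtain ⟨ξ, hξ, hξ0⟩ := IH (deriv g) U hU hg' c hcmono (hcIcc.trans hIcc) hc0
    refine ⟨ξ, hcIcc hξ, ?_⟩
    rw [iteratedDeriv_succ']
    exact hξ0

theorem iteratedDerivWithin_isOpen' {m : ℕ} {f : ℝ → ℝ} {U : Set ℝ} (hU : IsOpen U) {x : ℝ}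
    (hx : x ∈ U) : iteratedDerivWithin m f U x = iteratedDeriv m f x := by
  rw [iteratedDerivWithin_eq_iteratedFDerivWithin, iteratedDeriv_eq_iteratedFDeriv,
    iteratedFDerivWithin_of_isOpen m hU hx]

theorem iteratedDeriv_polyeval (m : ℕ) (q : ℝ[X]) :
    iteratedDeriv m (fun x : ℝ => q.eval x) = fun x => (derivative^[m] q).eval x := by
  induction m generalizing q with
  | zero => simp [iteratedDeriv_zero]
  | succ m ih =>
    rw [iteratedDeriv_succ', Function.iterate_succ_apply]
    rw [show deriv (fun x : ℝ => q.eval x) = fun x => (derivative q).eval x from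
      funext fun x => Polynomial.deriv q]
    exact ih (derivative q)

theorem divdiff_mean_value {ι : Type*} [DecidableEq ι] (m : ℕ) (f : ℝ → ℝ) (U : Set ℝ)
    (hU : IsOpen U) (hf : ContDiffOn ℝ m f U) (s : Finset ι) (p : ι → ℝ)
    (hcard : s.card = m + 1) (hinj : Set.InjOn p s)
    (B : Set ℝ) (hB : B.OrdConnected) (hpB : ∀ k ∈ s, p k ∈ B) (hBU : B ⊆ U) :
    ∃ ξ ∈ B, ∑ k ∈ s, f (p k) * (∏ l ∈ s.erase k, (p k - p l))⁻¹ =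
      iteratedDeriv m f ξ / (m.factorial : ℝ) := by
  classical
  set D : ℝ := ∑ k ∈ s, f (p k) * (∏ l ∈ s.erase k, (p k - p l))⁻¹ with hD
  set q : ℝ[X] := ∑ k ∈ s, C (f (p k) * (∏ l ∈ s.erase k, (p k - p l))⁻¹) *
      ∏ l ∈ s.erase k, (X - C (p l)) with hq
  have hprodmonic : ∀ k ∈ s, (∏ l ∈ s.erase k, (X - C (p l))).Monic := fun k _ =>
    monic_prod_of_monic _ _ fun l _ => monic_X_sub_C _
  have hproddeg : ∀ k ∈ s, (∏ l ∈ s.erase k, (X - C (p l))).natDegree = m := by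
    intro k hk
    rw [natDegree_prod_of_monic _ _ fun l _ => monic_X_sub_C _]
    simp [card_erase_of_mem hk, hcard]
  have hdeg : q.natDegree ≤ m := by
    apply natDegree_sum_le_of_forall_le
    intro k hk
    refine (natDegree_mul_le).trans ?_
    rw [natDegree_C, hproddeg k hk, zero_add]
  have hprodne : ∀ k ∈ s, (∏ l ∈ s.erase k, (p k - p l)) ≠ 0 := by
    intro k hk
    rw [Finset.prod_ne_zero_iff]
    intro l hl
    have hlk := (Finset.mem_erase.1 hl).1
    have hls := (Finset.mem_erase.1 hl).2
    exact sub_ne_zero.2 fun h => hlk (hinj hls hk h.symm)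
  have heval : ∀ j ∈ s, q.eval (p j) = f (p j) := by
    intro j hj
    rw [hq, eval_finset_sum]
    rw [Finset.sum_eq_single j]
    · rw [eval_mul, eval_C, eval_prod]
      simp only [eval_sub, eval_X, eval_C]
      rw [mul_assoc, inv_mul_cancel₀ (hprodne j hj), mul_one]
    · intro k hk hkj
      rw [eval_mul, eval_prod]
      have : ∏ l ∈ s.erase k, (p j - p l) = 0 := by
        apply Finset.prod_eq_zero (Finset.mem_erase.2 ⟨hkj.symm, hj⟩)
        simp
      simp only [eval_sub, eval_X, eval_C]
      rw [this, mul_zero]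
    · intro h; exact absurd hj h
  have hcoeff : q.coeff m = D := by
    rw [hq, finset_sum_coeff, hD]
    apply Finset.sum_congr rfl
    intro k hk
    rw [coeff_C_mul]
    have : (∏ l ∈ s.erase k, (X - C (p l))).coeff m = 1 := by
      have h1 := (hprodmonic k hk)
      rw [← hproddeg k hk]
      exact h1.coeff_natDegree
    rw [this, mul_one]
  -- the zeros
  set t : Finset ℝ := s.image p with ht
  have htcard : t.card = m + 1 := by rw [ht, Finset.card_image_of_injOn hinj, hcard]
  set y : Fin (m + 1) → ℝ := fun j => t.orderEmbOfFin htcard j with hy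
  have hymem : ∀ j, y j ∈ t := fun j => Finset.orderEmbOfFin_mem t htcard j
  have hymemB : ∀ j, y j ∈ B := by
    intro j
    obtain ⟨k, hk, hpk⟩ := Finset.mem_image.1 (hymem j)
    rw [← hpk]; exact hpB k hk
  have hymono : StrictMono y := (t.orderEmbOfFin htcard).strictMono
  have hIccB : Set.Icc (y 0) (y (Fin.last m)) ⊆ B := hB.out (hymemB 0) (hymemB _)
  set g : ℝ → ℝ := fun x => f x - q.eval x with hg
  have hgz : ∀ j, g (y j) = 0 := by
    intro j
    obtain ⟨k, hk, hpk⟩ := Finset.mem_image.1 (hymem j)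
    rw [← hpk, hg]
    simp only
    rw [heval k hk, sub_self]
  have hqC : ContDiffOn ℝ m (fun x : ℝ => q.eval x) U := (contDiff_polyeval m q).contDiffOn
  have hgC : ContDiffOn ℝ m g U := hf.sub hqC
  obtain ⟨ξ, hξmem, hξ0⟩ := iterated_rolle m g U hU hgC y hymono (hIccB.trans hBU) hgz
  have hξB : ξ ∈ B := hIccB hξmem
  have hξU : ξ ∈ U := hBU hξB
  refine ⟨ξ, hξB, ?_⟩
  -- split the iterated derivative
  have hsplit : iteratedDeriv m g ξ = iteratedDeriv m f ξ - iteratedDeriv m (fun x : ℝ => q.eval x) ξ := by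
    have h1 : iteratedDerivWithin m (f - fun x : ℝ => q.eval x) U ξ =
        iteratedDerivWithin m f U ξ - iteratedDerivWithin m (fun x : ℝ => q.eval x) U ξ :=
      iteratedDerivWithin_sub hξU hU.uniqueDiffOn (hf ξ hξU) (hqC ξ hξU)
    have h2 : iteratedDerivWithin m g U ξ = iteratedDerivWithin m (f - fun x : ℝ => q.eval x) U ξ := rfl
    rw [← iteratedDerivWithin_isOpen' hU hξU, h2, h1,
      iteratedDerivWithin_isOpen' hU hξU, iteratedDerivWithin_isOpen' hU hξU]
  have hpoly : iteratedDeriv m (fun x : ℝ => q.eval x) ξ = (m.factorial : ℝ) * D := by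
    rw [iteratedDeriv_polyeval]
    have hderC : derivative^[m] q = C ((m.factorial : ℝ) * D) := by
      ext i
      rw [coeff_iterate_derivative]
      cases i with
      | zero =>
        rw [zero_add, coeff_C]
        simp [Nat.descFactorial_self, hcoeff, nsmul_eq_mul]
      | succ i =>
        have : q.coeff (i + 1 + m) = 0 :=
          coeff_eq_zero_of_natDegree_lt (lt_of_le_of_lt hdeg (by omega))
        rw [this, coeff_C]
        simp
    rw [hderC]
    exact eval_C
  have hfval : iteratedDeriv m f ξ = (m.factorial : ℝ) * D := by
    have := hsplit
    rw [hξ0, hpoly] at this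
    linarith
  rw [hfval]
  field_simp

theorem det_divided (n : ℕ) (x : Fin n → ℝ) (hx : Function.Injective x) (f : Fin n → ℝ → ℝ) :
    Matrix.det (Matrix.of fun i j : Fin n => f j (x i)) /
      ∏ j : Fin n, ∏ i ∈ Finset.Iio j, (x j - x i)
    = Matrix.det (Matrix.of fun i j : Fin n =>
        ∑ k ∈ Finset.Iic i, f j (x k) * (∏ l ∈ (Finset.Iic i).erase k, (x k - x l))⁻¹) := by
  classical
  set F : Matrix (Fin n) (Fin n) ℝ := Matrix.of fun i j => f j (x i) with hF
  set L : Matrix (Fin n) (Fin n) ℝ :=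
    Matrix.of (fun i k => if k ≤ i then (∏ l ∈ (Finset.Iic i).erase k, (x k - x l))⁻¹ else 0) with hL
  have hmul : L * F = Matrix.of fun i j =>
      ∑ k ∈ Finset.Iic i, f j (x k) * (∏ l ∈ (Finset.Iic i).erase k, (x k - x l))⁻¹ := by
    ext i j
    rw [Matrix.mul_apply]
    simp only [hL, hF, Matrix.of_apply]
    rw [show (∑ k : Fin n, (if k ≤ i then (∏ l ∈ (Finset.Iic i).erase k, (x k - x l))⁻¹ else 0) * f j (x k))
        = ∑ k : Fin n, (if k ∈ Finset.Iic i then (∏ l ∈ (Finset.Iic i).erase k, (x k - x l))⁻¹ * f j (x k) else 0) by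
      apply Finset.sum_congr rfl; intro k _
      by_cases h : k ≤ i <;> simp [h, Finset.mem_Iic]]
    rw [Finset.sum_ite_mem, Finset.univ_inter]
    apply Finset.sum_congr rfl
    intro k _
    ring
  have hLtri : L.BlockTriangular OrderDual.toDual := by
    intro i k h
    have : ¬ k ≤ i := not_le.2 h
    simp [hL, this]
  have hdetL : L.det = ∏ i : Fin n, (∏ l ∈ Finset.Iio i, (x i - x l))⁻¹ := by
    rw [Matrix.det_of_lowerTriangular L hLtri]
    apply Finset.prod_congr rfl
    intro i _
    simp [hL, Finset.Iic_erase]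
  have hV : ∏ j : Fin n, ∏ i ∈ Finset.Iio j, (x j - x i) ≠ 0 := by
    rw [Finset.prod_ne_zero_iff]
    intro j _
    rw [Finset.prod_ne_zero_iff]
    intro i hi
    exact sub_ne_zero.2 fun h => (Finset.mem_Iio.1 hi).ne (hx h).symm
  have hdet : (L * F).det = L.det * F.det := Matrix.det_mul L F
  rw [hmul] at hdet
  rw [hdet, hdetL, Finset.prod_inv_distrib, div_eq_inv_mul]

theorem dd_tendsto (n : ℕ) (a : ℝ) (g : ℝ → ℝ) (U : Set ℝ) (hU : IsOpen U) (haU : a ∈ U)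
    (i : Fin n) (hg : ContDiffOn ℝ (i : ℕ) g U) :
    Filter.Tendsto (fun x : Fin n → ℝ =>
        ∑ k ∈ Finset.Iic i, g (x k) * (∏ l ∈ (Finset.Iic i).erase k, (x k - x l))⁻¹)
      (nhdsWithin (fun _ => a) {x : Fin n → ℝ | Function.Injective x})
      (nhds (iteratedDeriv (i : ℕ) g a / ((i : ℕ).factorial : ℝ))) := by
  rw [Metric.tendsto_nhdsWithin_nhds]
  intro ε hε
  set M : ℝ := ((i : ℕ).factorial : ℝ) with hMdef
  have hM : 0 < M := by positivity
  have hcont : ContinuousAt (iteratedDeriv (i : ℕ) g) a := by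
    have h1 : ContinuousOn (iteratedDerivWithin (i : ℕ) g U) U :=
      hg.continuousOn_iteratedDerivWithin le_rfl hU.uniqueDiffOn
    have h2 : ContinuousOn (iteratedDeriv (i : ℕ) g) U :=
      h1.congr fun z hz => (iteratedDerivWithin_isOpen' hU hz).symm
    exact h2.continuousAt (hU.mem_nhds haU)
  obtain ⟨δ₁, hδ₁, hδ₁p⟩ := Metric.continuousAt_iff.1 hcont (ε * M) (by positivity)
  obtain ⟨δ₂, hδ₂, hball⟩ := Metric.isOpen_iff.1 hU a haU
  refine ⟨min δ₁ δ₂, by positivity, ?_⟩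
  intro x hxinj hdist
  have hδpos : (0:ℝ) < min δ₁ δ₂ := by positivity
  have hco : ∀ k : Fin n, x k ∈ Metric.ball a (min δ₁ δ₂) := by
    intro k
    exact (dist_pi_lt_iff hδpos).1 hdist k
  have hsub : Metric.ball a (min δ₁ δ₂) ⊆ U :=
    (Metric.ball_subset_ball (min_le_right _ _)).trans hball
  obtain ⟨ξ, hξB, hξeq⟩ := divdiff_mean_value (i : ℕ) g U hU hg (Finset.Iic i) x
    (by rw [Fin.card_Iic]) (Set.injOn_of_injective hxinj)
    (Metric.ball a (min δ₁ δ₂)) ((convex_ball a _).ordConnected) (fun k _ => hco k) hsub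
  rw [hξeq]
  have hdξ : dist ξ a < δ₁ := lt_of_lt_of_le (Metric.mem_ball.1 hξB) (min_le_left _ _)
  have := hδ₁p hdξ
  rw [Real.dist_eq] at this ⊢
  rw [div_sub_div_same, abs_div, abs_of_pos hM]
  rw [div_lt_iff₀ hM]
  exact this

/-- Confluent limit of a determinant divided by the Vandermonde determinant: for `f_1,…,f_n`
`(n-1)`-times continuously differentiable near `a`, as `(x_1,…,x_n) → (a,…,a)` through
tuples with pairwise distinct entries,
`det(f_j(x_i))/∏_{i<j}(x_j-x_i) → det(f_j^{(i-1)}(a))/∏_{k=1}^{n-1} k!`. -/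
theorem confluent_vandermonde_limit (n : ℕ) (hn : 1 ≤ n) (a : ℝ)
    (f : Fin n → ℝ → ℝ)
    (hf : ∀ j : Fin n, ContDiffAt ℝ ((n - 1 : ℕ) : ℕ∞) (f j) a) :
    Filter.Tendsto
      (fun x : Fin n → ℝ =>
        Matrix.det (Matrix.of fun i j : Fin n => f j (x i)) /
          ∏ j : Fin n, ∏ i ∈ Finset.Iio j, (x j - x i))
      (nhdsWithin (fun _ => a) {x : Fin n → ℝ | Function.Injective x})
      (nhds (Matrix.det (Matrix.of fun i j : Fin n => iteratedDeriv (i : ℕ) (f j) a) /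
        ∏ k ∈ Finset.range n, (Nat.factorial k : ℝ))) := by
  classical
  have hUj : ∀ j : Fin n, ∃ u : Set ℝ, a ∈ u ∧ IsOpen u ∧
      ContDiffOn ℝ ((n - 1 : ℕ) : ℕ∞) (f j) u := by
    intro j
    obtain ⟨u, hu, hcd⟩ := (hf j).contDiffOn le_rfl (fun h => absurd (WithTop.coe_inj.1 h) (by simp))
    exact ⟨interior u, mem_interior_iff_mem_nhds.2 hu, isOpen_interior,
      hcd.mono interior_subset⟩
  choose u hau hopen hcd using hUj
  set U : Set ℝ := ⋂ j, u j with hUdef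
  have hUopen : IsOpen U := isOpen_iInter_of_finite hopen
  have haU : a ∈ U := mem_iInter.2 hau
  have hcdU : ∀ (j i : Fin n), ContDiffOn ℝ (i : ℕ) (f j) U := by
    intro j i
    refine ((hcd j).mono (iInter_subset _ j)).of_le ?_
    have : (i : ℕ) ≤ n - 1 := by omega
    exact_mod_cast this
  -- limit of the divided-difference matrix determinant
  set l := nhdsWithin (fun _ : Fin n => a) {x : Fin n → ℝ | Function.Injective x} with hl
  set T : Matrix (Fin n) (Fin n) ℝ :=
    Matrix.of (fun i j : Fin n => iteratedDeriv (i : ℕ) (f j) a / ((i : ℕ).factorial : ℝ)) with hT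
  have hdet : Filter.Tendsto (fun x : Fin n → ℝ => Matrix.det (Matrix.of fun i j : Fin n =>
      ∑ k ∈ Finset.Iic i, f j (x k) * (∏ l ∈ (Finset.Iic i).erase k, (x k - x l))⁻¹)) l
      (nhds T.det) := by
    have hentry : ∀ i j : Fin n, Filter.Tendsto (fun x : Fin n → ℝ =>
        ∑ k ∈ Finset.Iic i, f j (x k) * (∏ l ∈ (Finset.Iic i).erase k, (x k - x l))⁻¹) l
        (nhds (T i j)) := fun i j => dd_tendsto n a (f j) U hUopen haU i (hcdU j i)
    simp only [Matrix.det_apply']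
    apply tendsto_finset_sum
    intro σ _
    apply Filter.Tendsto.const_mul
    apply tendsto_finset_prod
    intro i _
    exact hentry (σ i) i
  -- identify the limit value
  have hTval : T.det = Matrix.det (Matrix.of fun i j : Fin n =>
      iteratedDeriv (i : ℕ) (f j) a) / ∏ k ∈ Finset.range n, (Nat.factorial k : ℝ) := by
    have : T = Matrix.of (fun i j : Fin n => (((i : ℕ).factorial : ℝ))⁻¹ *
        (Matrix.of fun i j : Fin n => iteratedDeriv (i : ℕ) (f j) a) i j) := by
      ext i j
      simp [hT, div_eq_inv_mul]
    rw [this, Matrix.det_mul_column]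
    rw [div_eq_inv_mul, ← Finset.prod_inv_distrib]
    congr 1
    rw [← Fin.prod_univ_eq_prod_range (fun k => ((Nat.factorial k : ℝ))⁻¹) n]
  rw [← hTval]
  apply Filter.Tendsto.congr' _ hdet
  filter_upwards [self_mem_nhdsWithin] with x hx
  exact (det_divided n x hx f).symm
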